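/- Let x be a solution of (E) with x(t) ≥ 0 and x′(t) ≥ 0 for all t ≥ τ. Then for every k, x′(ζ_k) ≥ (r(t_{k+1})/r(ζ_k))·x′(t_{k+1}) + (φ(x(ζ_k))/r(ζ_k))·∫_{ζ_k}^{t_{k+1}} p(u) du. -/

import Mathlib

open MeasureTheory Set Filter Topology

theorem stmt10
    (t ζ : ℕ → ℝ) (ht_mono : StrictMono t)
    (ht_top : Tendsto t atTop atTop)
    (hζ : ∀ k : ℕ, ζ k ∈ Icc (t k) (t (k+1)))
    (r : ℝ → ℝ) (hr_cont : ContinuousOn r (Ici (t 0)))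
    (hr_pos : ∀ s ∈ Ici (t 0), 0 < r s)
    (f : ℝ → ℝ → ℝ)
    (hf_cont : ContinuousOn (fun q : ℝ × ℝ => f q.1 q.2) ((Ici (t 0)) ×ˢ (univ : Set ℝ)))
    (hf_sign : ∀ s ∈ Ici (t 0), ∀ y : ℝ, y ≠ 0 → 0 < y * f s y)
    (x x' : ℝ → ℝ)
    (hx_deriv : ∀ s ∈ Ici (t 0), HasDerivAt x (x' s) s)
    (hx'_cont : ContinuousOn x' (Ici (t 0)))
    (hE : ∀ k : ℕ, ∀ s ∈ Ioo (t k) (t (k+1)),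
      HasDerivAt (fun u => r u * x' u) (-(f s (x (ζ k)))) s)
    (p : ℝ → ℝ) (hp_cont : ContinuousOn p (Ici (t 0)))
    (hp_nonneg : ∀ s ∈ Ici (t 0), 0 ≤ p s)
    (φ : ℝ → ℝ) (hφ_smooth : ContDiff ℝ 1 φ) (hφ_mono : Monotone φ)
    (hφ_sign : ∀ y : ℝ, y ≠ 0 → 0 < y * φ y)
    (hfp_pos : ∀ s ∈ Ici (t 0), ∀ y : ℝ, 0 < y → p s * φ y ≤ f s y)
    (hfp_neg : ∀ s ∈ Ici (t 0), ∀ y : ℝ, y < 0 → f s y ≤ p s * φ y)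
    (hx_nonneg : ∀ s ∈ Ici (t 0), 0 ≤ x s)
    (hx'_nonneg : ∀ s ∈ Ici (t 0), 0 ≤ x' s) :
    ∀ k : ℕ,
      (r (t (k+1)) / r (ζ k)) * x' (t (k+1)) +
        (φ (x (ζ k)) / r (ζ k)) * ∫ u in ζ k..t (k+1), p u ≤ x' (ζ k) := by
  intro k
  have htk0 : t 0 ≤ t k := ht_mono.monotone (Nat.zero_le k)
  have hab : ζ k ≤ t (k+1) := (hζ k).2
  have hta : t k ≤ ζ k := (hζ k).1
  have ha0 : t 0 ≤ ζ k := le_trans htk0 hta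
  have hb0 : t 0 ≤ t (k+1) := le_trans ha0 hab
  have hsub : Icc (ζ k) (t (k+1)) ⊆ Ici (t 0) := fun u hu => le_trans ha0 hu.1
  have hsubu : uIcc (ζ k) (t (k+1)) ⊆ Ici (t 0) := by
    rw [uIcc_of_le hab]; exact hsub
  have hc0 : (0:ℝ) ≤ x (ζ k) := hx_nonneg _ ha0
  -- φ 0 = 0
  have hφ0 : φ 0 = 0 := by
    have hcont : ContinuousAt φ 0 := hφ_smooth.continuous.continuousAt
    have h1 : (0:ℝ) ≤ φ 0 := by
      have htend : Tendsto φ (𝓝[>] (0:ℝ)) (𝓝 (φ 0)) :=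
        (hcont.continuousWithinAt).tendsto
      refine ge_of_tendsto htend ?_
      filter_upwards [self_mem_nhdsWithin] with y hy
      have hy' : 0 < y := hy
      have h := hφ_sign y (ne_of_gt hy')
      nlinarith
    have h2 : φ 0 ≤ 0 := by
      have htend : Tendsto φ (𝓝[<] (0:ℝ)) (𝓝 (φ 0)) :=
        (hcont.continuousWithinAt).tendsto
      refine le_of_tendsto htend ?_
      filter_upwards [self_mem_nhdsWithin] with y hy
      have hy' : y < 0 := hy
      have h := hφ_sign y (ne_of_lt hy')
      nlinarith
    linarith
  -- f s 0 ≥ 0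
  have hf0 : ∀ s ∈ Ici (t 0), (0:ℝ) ≤ f s 0 := by
    intro s hs
    have hcont : ContinuousAt (fun y => f s y) 0 := by
      have h1 : ContinuousWithinAt (fun q : ℝ × ℝ => f q.1 q.2) (Ici (t 0) ×ˢ univ) (s, 0) :=
        hf_cont _ ⟨hs, mem_univ _⟩
      have h2 : Continuous (fun y : ℝ => ((s, y) : ℝ × ℝ)) :=
        continuous_const.prodMk continuous_id
      have h3 : ContinuousWithinAt (fun y => f s y) univ 0 :=
        h1.comp h2.continuousWithinAt (fun y _ => ⟨hs, mem_univ _⟩)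
      simpa [continuousWithinAt_univ] using h3
    have htend : Tendsto (fun y => f s y) (𝓝[>] (0:ℝ)) (𝓝 (f s 0)) :=
      (hcont.continuousWithinAt).tendsto
    refine ge_of_tendsto htend ?_
    filter_upwards [self_mem_nhdsWithin] with y hy
    have hy' : 0 < y := hy
    have h := hf_sign s hs y (ne_of_gt hy')
    nlinarith
  -- continuity of u ↦ f u (x (ζ k)) on Ici (t 0)
  have hfc_cont : ContinuousOn (fun u => f u (x (ζ k))) (Ici (t 0)) := by
    have h1 : ContinuousOn (fun u : ℝ => ((u, x (ζ k)) : ℝ × ℝ)) (Ici (t 0)) :=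
      (continuous_id.prodMk continuous_const).continuousOn
    exact hf_cont.comp h1 (fun u hu => ⟨hu, mem_univ _⟩)
  -- pointwise bound
  have hpt : ∀ u ∈ Icc (ζ k) (t (k+1)), φ (x (ζ k)) * p u ≤ f u (x (ζ k)) := by
    intro u hu
    have hu0 : u ∈ Ici (t 0) := hsub hu
    rcases hc0.lt_or_eq with hlt | heq
    · have := hfp_pos u hu0 _ hlt
      linarith [this]
    · rw [← heq, hφ0, zero_mul]
      exact hf0 u hu0
  -- FTC
  have hg_cont : ContinuousOn (fun u => r u * x' u) (Icc (ζ k) (t (k+1))) :=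
    (hr_cont.mono hsub).mul (hx'_cont.mono hsub)
  have hderiv : ∀ s ∈ Ioo (ζ k) (t (k+1)),
      HasDerivWithinAt (fun u => r u * x' u) (-(f s (x (ζ k)))) (Ioi s) s := by
    intro s hs
    exact (hE k s ⟨lt_of_le_of_lt hta hs.1, hs.2⟩).hasDerivWithinAt
  have hint_f : IntervalIntegrable (fun u => f u (x (ζ k))) volume (ζ k) (t (k+1)) :=
    (hfc_cont.mono hsubu).intervalIntegrable
  have hint_negf : IntervalIntegrable (fun u => -(f u (x (ζ k)))) volume (ζ k) (t (k+1)) :=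
    hint_f.neg
  have hFTC := intervalIntegral.integral_eq_sub_of_hasDeriv_right_of_le hab hg_cont hderiv
    hint_negf
  have hneg : (∫ u in ζ k..t (k+1), -(f u (x (ζ k)))) =
      -∫ u in ζ k..t (k+1), f u (x (ζ k)) := intervalIntegral.integral_neg
  have hint_pφ : IntervalIntegrable (fun u => φ (x (ζ k)) * p u) volume (ζ k) (t (k+1)) :=
    ((continuousOn_const.mul (hp_cont.mono hsubu))).intervalIntegrable
  have hmono := intervalIntegral.integral_mono_on hab hint_pφ hint_f hpt
  have hcm : (∫ u in ζ k..t (k+1), φ (x (ζ k)) * p u) =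
      φ (x (ζ k)) * ∫ u in ζ k..t (k+1), p u := intervalIntegral.integral_const_mul _ _
  have hra : 0 < r (ζ k) := hr_pos _ ha0
  have key : r (t (k+1)) * x' (t (k+1)) + φ (x (ζ k)) * (∫ u in ζ k..t (k+1), p u)
      ≤ r (ζ k) * x' (ζ k) := by
    rw [hneg] at hFTC
    rw [hcm] at hmono
    linarith
  rw [div_mul_eq_mul_div, div_mul_eq_mul_div, ← add_div, div_le_iff₀ hra]
  linarith
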